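/- A Fredholm matrix A ∈ B(K) has index 0 if and only if A = V + T for some invertible V ∈ B(K) and some T ∈ M_∞(K). -/

import Mathlib

open LinearMap

set_option synthInstance.maxHeartbeats 1000000
set_option maxHeartbeats 2000000

/-- The submodule `V_n` of finitely supported sequences vanishing below `n`. -/
def tailSubmodule (K : Type*) [Field K] (n : ℕ) : Submodule K (ℕ →₀ K) where
  carrier := {v | ∀ i < n, v i = 0}
  add_mem' := by intro a b ha hb i hi; simp [Finsupp.add_apply, ha i hi, hb i hi]
  zero_mem' := by intro i hi; simp
  smul_mem' := by intro c a ha i hi; simp [Finsupp.smul_apply, ha i hi]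

/-- The algebra of "row and column finite" endomorphisms of `ℕ →₀ K`. -/
def RCFM (K : Type*) [Field K] : Subalgebra K (Module.End K (ℕ →₀ K)) where
  carrier := {f | ∀ n, ∃ m, ∀ v ∈ tailSubmodule K m, f v ∈ tailSubmodule K n}
  mul_mem' := by
    intro f g hf hg n
    obtain ⟨m₁, h₁⟩ := hf n
    obtain ⟨m₂, h₂⟩ := hg m₁
    exact ⟨m₂, fun v hv => h₁ _ (h₂ v hv)⟩
  add_mem' := by
    intro f g hf hg n
    obtain ⟨m₁, h₁⟩ := hf n
    obtain ⟨m₂, h₂⟩ := hg n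
    refine ⟨max m₁ m₂, fun v hv => ?_⟩
    have hv₁ : v ∈ tailSubmodule K m₁ := fun i hi => hv i (lt_of_lt_of_le hi (le_max_left _ _))
    have hv₂ : v ∈ tailSubmodule K m₂ := fun i hi => hv i (lt_of_lt_of_le hi (le_max_right _ _))
    exact (tailSubmodule K n).add_mem (h₁ v hv₁) (h₂ v hv₂)
  algebraMap_mem' := by
    intro r n
    refine ⟨n, fun v hv => ?_⟩
    have : (algebraMap K (Module.End K (ℕ →₀ K)) r) v = r • v := rfl
    rw [this]
    exact (tailSubmodule K n).smul_mem r hv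

/-- Finite rank endomorphisms, playing the role of `M_∞(K)`. -/
def FinRank {K : Type*} [Field K] (f : Module.End K (ℕ →₀ K)) : Prop :=
  FiniteDimensional K (LinearMap.range f)

variable {K : Type*} [Field K]

theorem finrank_zero : FinRank (0 : Module.End K (ℕ →₀ K)) := by
  unfold FinRank
  rw [LinearMap.range_zero]
  infer_instance

theorem finrank_add {f g : Module.End K (ℕ →₀ K)} (hf : FinRank f) (hg : FinRank g) :
    FinRank (f + g) := by
  unfold FinRank at *
  haveI := hf; haveI := hg
  have hle : LinearMap.range (f + g) ≤ LinearMap.range f ⊔ LinearMap.range g := by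
    rintro x ⟨v, rfl⟩
    exact Submodule.add_mem_sup (LinearMap.mem_range_self f v) (LinearMap.mem_range_self g v)
  exact Submodule.finiteDimensional_of_le hle

theorem finrank_neg {f : Module.End K (ℕ →₀ K)} (hf : FinRank f) : FinRank (-f) := by
  unfold FinRank at *
  rwa [LinearMap.range_neg]

theorem finrank_mul_left (f : Module.End K (ℕ →₀ K)) {g : Module.End K (ℕ →₀ K)}
    (hg : FinRank g) : FinRank (f * g) := by
  unfold FinRank at *
  haveI := hg
  rw [show f * g = f.comp g from rfl, LinearMap.range_comp]
  exact Module.Finite.map _ f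

theorem finrank_mul_right {f : Module.End K (ℕ →₀ K)} (g : Module.End K (ℕ →₀ K))
    (hf : FinRank f) : FinRank (f * g) := by
  unfold FinRank at *
  haveI := hf
  have hle : LinearMap.range (f * g) ≤ LinearMap.range f := by
    rintro x ⟨v, rfl⟩; exact LinearMap.mem_range_self f (g v)
  exact Submodule.finiteDimensional_of_le hle


noncomputable instance instRingRCFM (K : Type*) [Field K] : Ring (RCFM K) :=
  @Subalgebra.toRing K (Module.End K (ℕ →₀ K)) _ _ _ (RCFM K)

/-- `M_∞(K)` as a two-sided ideal of `RCFM K`. -/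
noncomputable def Minf (K : Type*) [Field K] : TwoSidedIdeal (RCFM K) :=
  TwoSidedIdeal.mk' {f : RCFM K | FinRank (f : Module.End K (ℕ →₀ K))}
    finrank_zero
    (fun hx hy => finrank_add hx hy)
    (fun hx => finrank_neg hx)
    (fun hy => finrank_mul_left _ hy)
    (fun hx => finrank_mul_right _ hx)


/-- The quotient algebra `Q(K) = RCFM(K)/M_∞(K)`. -/
abbrev QK (K : Type*) [Field K] := (Minf K).ringCon.Quotient

/-- The quotient map `π : RCFM(K) → Q(K)`. -/
noncomputable abbrev quotMap (K : Type*) [Field K] : RCFM K →+* QK K := (Minf K).ringCon.mk'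

/-- The index of an endomorphism. -/
noncomputable def ind (f : Module.End K (ℕ →₀ K)) : ℤ :=
  (Module.finrank K (LinearMap.ker f) : ℤ) -
    (Module.finrank K ((ℕ →₀ K) ⧸ LinearMap.range f) : ℤ)


section auxLemmas

variable {K : Type*} [Field K]

lemma mem_tail {n : ℕ} {v : ℕ →₀ K} : v ∈ tailSubmodule K n ↔ ∀ i < n, v i = 0 := Iff.rfl

lemma mem_RCFM {f : Module.End K (ℕ →₀ K)} : f ∈ RCFM K ↔
    ∀ n, ∃ m, ∀ v ∈ tailSubmodule K m, f v ∈ tailSubmodule K n := Iff.rfl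

/-- Every finite-dimensional submodule of `ℕ →₀ K` has uniformly bounded support. -/
lemma exists_support_bound (p : Submodule K (ℕ →₀ K)) [FiniteDimensional K p] :
    ∃ m : ℕ, ∀ v ∈ p, ∀ i, m ≤ i → v i = 0 := by
  obtain ⟨S, hS⟩ := ((Submodule.fg_iff_finiteDimensional p).mpr inferInstance)
  classical
  refine ⟨(S.sup fun v => v.support.sup id) + 1, ?_⟩
  intro v hv
  rw [← hS] at hv
  induction hv using Submodule.span_induction with
  | mem x hx =>
      intro i hi
      by_contra h
      have hx' : i ∈ x.support := Finsupp.mem_support_iff.mpr h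
      have h1 : (id i : ℕ) ≤ x.support.sup id := Finset.le_sup hx'
      have h2 : x.support.sup id ≤ S.sup fun v => v.support.sup id :=
        Finset.le_sup (f := fun s : ℕ →₀ K => s.support.sup id) hx
      simp only [id_eq] at h1
      omega
  | zero => intro i _; simp
  | add x y _ _ hx hy => intro i hi; simp [Finsupp.add_apply, hx i hi, hy i hi]
  | smul c x _ hx => intro i hi; simp [Finsupp.smul_apply, hx i hi]

lemma RCFM_neg_mem (y : Module.End K (ℕ →₀ K)) (hy : y ∈ RCFM K) : -y ∈ RCFM K := by
  have h := (RCFM K).smul_mem hy (-1 : K)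
  rwa [neg_one_smul K y] at h

lemma RCFM_sub_mem (x y : Module.End K (ℕ →₀ K)) (hx : x ∈ RCFM K) (hy : y ∈ RCFM K) :
    x - y ∈ RCFM K := by
  rw [sub_eq_add_neg x y]
  exact (RCFM K).add_mem hx (RCFM_neg_mem y hy)

/-- A finite-rank element of `RCFM K` annihilates some tail submodule. -/
lemma kills_tail {t : Module.End K (ℕ →₀ K)} (ht : t ∈ RCFM K) (hfr : FinRank t) :
    ∃ m, ∀ v ∈ tailSubmodule K m, t v = 0 := by
  have : FiniteDimensional K (LinearMap.range t) := hfr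
  obtain ⟨N, hN⟩ := exists_support_bound (LinearMap.range t)
  obtain ⟨m, hm⟩ := mem_RCFM.mp ht N
  refine ⟨m, fun v hv => ?_⟩
  have h1 := hm v hv
  ext i
  by_cases hi : i < N
  · exact h1 i hi
  · exact hN _ (LinearMap.mem_range_self t v) i (le_of_not_gt hi)

/-- Core index lemma: for a finite-rank `s`, `1 + s` has finite-dimensional kernel and
cokernel, of the same dimension. -/
lemma one_add_finrank_facts {M : Type*} [AddCommGroup M] [Module K M]
    (s : Module.End K M) (hs : FiniteDimensional K (LinearMap.range s)) :
    FiniteDimensional K (LinearMap.ker (1 + s)) ∧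
    FiniteDimensional K (M ⧸ LinearMap.range (1 + s)) ∧
    Module.finrank K (LinearMap.ker (1 + s)) =
      Module.finrank K (M ⧸ LinearMap.range (1 + s)) := by
  set F := LinearMap.range s with hF
  set u : Module.End K M := 1 + s with hu
  have huapp : ∀ x : M, u x = x + s x := fun x => by simp [hu]
  have hinv : ∀ x ∈ F, u x ∈ F := by
    intro x hx
    rw [huapp]
    exact F.add_mem hx (LinearMap.mem_range_self s x)
  set u' : F →ₗ[K] F := u.restrict hinv with hu'
  have hker_le : LinearMap.ker u ≤ F := by
    intro x hx
    have h0 : x + s x = 0 := by rw [← huapp]; exact hx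
    exact ⟨-x, (map_neg s x).trans ((eq_neg_of_add_eq_zero_left h0).symm)⟩
  have hker' : LinearMap.ker u' = (LinearMap.ker u).comap F.subtype := ker_restrict hinv
  have ekers : ((LinearMap.ker u).comap F.subtype) ≃ₗ[K] LinearMap.ker u :=
    Submodule.comapSubtypeEquivOfLe hker_le
  have hker_fd : FiniteDimensional K (LinearMap.ker u) := by
    have : FiniteDimensional K ((LinearMap.ker u).comap F.subtype) :=
      Submodule.finiteDimensional_of_le le_top
    exact Module.Finite.equiv ekers
  have hker_rank : Module.finrank K (LinearMap.ker u') = Module.finrank K (LinearMap.ker u) := by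
    rw [hker']; exact ekers.finrank_eq
  set g : F →ₗ[K] M ⧸ LinearMap.range u := (LinearMap.range u).mkQ ∘ₗ F.subtype with hg
  have hgsurj : Function.Surjective g := by
    intro y
    obtain ⟨x, rfl⟩ := (LinearMap.range u).mkQ_surjective y
    refine ⟨⟨-(s x), F.neg_mem (LinearMap.mem_range_self s x)⟩, ?_⟩
    have h5 : g ⟨-(s x), F.neg_mem (LinearMap.mem_range_self s x)⟩ =
        (LinearMap.range u).mkQ (-(s x)) := rfl
    rw [h5]
    rw [Submodule.mkQ_apply, Submodule.mkQ_apply, Submodule.Quotient.eq]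
    exact ⟨-x, by rw [huapp, map_neg]; abel⟩
  have hgker : LinearMap.ker g = LinearMap.range u' := by
    apply le_antisymm
    · rintro ⟨x, hxF⟩ hx
      have hxru : x ∈ LinearMap.range u := by
        have h6 : (LinearMap.range u).mkQ x = 0 := hx
        rwa [Submodule.mkQ_apply, Submodule.Quotient.mk_eq_zero] at h6
      obtain ⟨z, hz⟩ := hxru
      have hzeq : z = x - s z := by
        have h6 := huapp z
        rw [hz] at h6
        rw [h6]; abel
      have hzF : z ∈ F := by
        rw [hzeq]
        exact F.sub_mem hxF (LinearMap.mem_range_self s z)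
      exact ⟨⟨z, hzF⟩, Subtype.ext (by simpa [u', LinearMap.restrict_apply] using hz)⟩
    · rintro _ ⟨⟨z, hzF⟩, rfl⟩
      have h7 : (u' ⟨z, hzF⟩ : M) = u z := rfl
      show (LinearMap.range u).mkQ ((u' ⟨z, hzF⟩ : M)) = 0
      rw [h7, Submodule.mkQ_apply, Submodule.Quotient.mk_eq_zero]
      exact LinearMap.mem_range_self u z
  have equot : (F ⧸ LinearMap.range u') ≃ₗ[K] M ⧸ LinearMap.range u := by
    rw [← hgker]
    exact g.quotKerEquivOfSurjective hgsurj
  have hquot_fd : FiniteDimensional K (M ⧸ LinearMap.range u) :=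
    Module.Finite.equiv equot
  have hquot_rank : Module.finrank K (F ⧸ LinearMap.range u') =
      Module.finrank K (M ⧸ LinearMap.range u) := equot.finrank_eq
  have h1 : Module.finrank K (LinearMap.range u') + Module.finrank K (LinearMap.ker u') =
      Module.finrank K F := finrank_range_add_finrank_ker u'
  have h2 : Module.finrank K (F ⧸ LinearMap.range u') +
      Module.finrank K (LinearMap.range u') = Module.finrank K F :=
    Submodule.finrank_quotient_add_finrank _
  exact ⟨hker_fd, hquot_fd, by omega⟩

end auxLemmas

/-- A Fredholm matrix `A ∈ B(K)` has index `0` if and only if `A = V + T` for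
some invertible `V ∈ B(K)` and some `T ∈ M_∞(K)`. -/
theorem index_zero_iff_invertible_plus_finite_rank {K : Type*} [Field K] (A : RCFM K)
    (hA : IsUnit (quotMap K A)) :
    ind (A : Module.End K (ℕ →₀ K)) = 0 ↔
      ∃ V T : RCFM K, IsUnit V ∧ T ∈ Minf K ∧ A = V + T := by
  have memMinf : ∀ x : RCFM K, x ∈ Minf K ↔ FinRank (x : Module.End K (ℕ →₀ K)) := by
    intro x
    exact TwoSidedIdeal.mem_mk' _ _ _ _ _ _ x
  constructor
  · intro hind
    -- Extract an approximate inverse B of A.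
    obtain ⟨u, hu⟩ := hA
    obtain ⟨B, hB⟩ : ∃ B : RCFM K, quotMap K B = ((u⁻¹ : (QK K)ˣ) : QK K) :=
      ⟨Quotient.out ((u⁻¹ : (QK K)ˣ) : QK K), Quotient.out_eq _⟩
    have key : ∀ x : RCFM K, quotMap K x = 1 → x - 1 ∈ Minf K := by
      intro x hx
      have h1 : quotMap K x = quotMap K 1 := by rw [hx, map_one]
      have h2 : (Minf K).ringCon x 1 := Quotient.eq''.mp h1
      exact ((Minf K).rel_iff x 1).mp h2
    have hs₀ : (B * A - 1 : RCFM K) ∈ Minf K := by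
      refine key _ ?_
      rw [map_mul, hB, ← hu]
      exact u.inv_mul
    have ht₀ : (A * B - 1 : RCFM K) ∈ Minf K := by
      refine key _ ?_
      rw [map_mul, hB, ← hu]
      exact u.mul_inv
    set Am : Module.End K (ℕ →₀ K) := (A : Module.End K (ℕ →₀ K)) with hAm
    set Bm : Module.End K (ℕ →₀ K) := (B : Module.End K (ℕ →₀ K)) with hBm
    have hs₀End : ((B * A - 1 : RCFM K) : Module.End K (ℕ →₀ K)) = Bm * Am - 1 := rfl
    have ht₀End : ((A * B - 1 : RCFM K) : Module.End K (ℕ →₀ K)) = Am * Bm - 1 := rfl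
    have hs₀fr : FinRank (Bm * Am - 1) := by
      rw [← hs₀End]; exact (memMinf _).mp hs₀
    have ht₀fr : FinRank (Am * Bm - 1) := by
      rw [← ht₀End]; exact (memMinf _).mp ht₀
    -- ker A is finite dimensional
    have hrs₀ : FiniteDimensional K (LinearMap.range (Bm * Am - 1)) := hs₀fr
    have hkerA : FiniteDimensional K (LinearMap.ker Am) := by
      have hle : LinearMap.ker Am ≤ LinearMap.range (Bm * Am - 1) := by
        intro x hx
        refine ⟨-x, ?_⟩
        have hx0 : Am x = 0 := hx
        simp [LinearMap.sub_apply, Module.End.mul_apply, hx0]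
      exact Submodule.finiteDimensional_of_le hle
    -- coker A is finite dimensional
    obtain ⟨_, hcq, _⟩ := one_add_finrank_facts (Am * Bm - 1) ht₀fr
    have h1t : (1 : Module.End K (ℕ →₀ K)) + (Am * Bm - 1) = Am * Bm := by abel
    haveI hcokerA : FiniteDimensional K ((ℕ →₀ K) ⧸ LinearMap.range Am) := by
      have hle : LinearMap.range (1 + (Am * Bm - 1)) ≤ LinearMap.range Am := by
        rw [h1t]
        rintro x ⟨v, rfl⟩
        exact ⟨Bm v, rfl⟩
      haveI := hcq
      refine Module.Finite.of_surjective
        (Submodule.mapQ _ _ (LinearMap.id) (by simpa using hle)) ?_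
      intro y
      obtain ⟨x, rfl⟩ := (LinearMap.range Am).mkQ_surjective y
      exact ⟨Submodule.Quotient.mk x, by rw [Submodule.mapQ_apply]; rfl⟩
    -- equal dimensions
    have hd : Module.finrank K (LinearMap.ker Am) =
        Module.finrank K ((ℕ →₀ K) ⧸ LinearMap.range Am) := by
      unfold ind at hind
      omega
    -- bound support of ker A
    obtain ⟨m, hm⟩ := exists_support_bound (LinearMap.ker Am)
    have hdisj : Disjoint (LinearMap.ker Am) (tailSubmodule K m) := by
      rw [Submodule.disjoint_def]
      intro x hx1 hx2
      ext i
      by_cases hi : i < m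
      · exact hx2 i hi
      · exact hm x hx1 i (le_of_not_gt hi)
    obtain ⟨W₀, hW₀⟩ := Submodule.exists_isCompl (LinearMap.ker Am ⊔ tailSubmodule K m)
    set W := tailSubmodule K m ⊔ W₀ with hW
    have hcompl : IsCompl (LinearMap.ker Am) W := by
      constructor
      · rw [Submodule.disjoint_def]
        intro x hx hxW
        obtain ⟨v, hv, w, hw, rfl⟩ := Submodule.mem_sup.mp hxW
        have hw0 : w = 0 := by
          have hmem : w ∈ (LinearMap.ker Am ⊔ tailSubmodule K m) ⊓ W₀ := by
            constructor
            · have : w = (v + w) - v := by abel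
              rw [this]
              exact Submodule.sub_mem _ (Submodule.mem_sup_left hx)
                (Submodule.mem_sup_right hv)
            · exact hw
          rw [disjoint_iff.mp hW₀.disjoint] at hmem
          exact hmem
        rw [hw0, add_zero] at hx ⊢
        exact Submodule.disjoint_def.mp hdisj v hx hv
      · rw [codisjoint_iff]
        rw [hW, ← sup_assoc]
        exact codisjoint_iff.mp hW₀.codisjoint
    obtain ⟨C, hC⟩ := Submodule.exists_isCompl (LinearMap.range Am)
    have equivC : ((ℕ →₀ K) ⧸ LinearMap.range Am) ≃ₗ[K] C :=
      Submodule.quotientEquivOfIsCompl _ _ hC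
    haveI hkerA' : FiniteDimensional K (LinearMap.ker Am) := hkerA
    haveI hCfd : FiniteDimensional K C := Module.Finite.equiv equivC
    have hCrank : Module.finrank K (LinearMap.ker Am) = Module.finrank K C := by
      rw [hd]; exact equivC.finrank_eq
    haveI : Module.Free K ↥(LinearMap.ker Am) := Module.Free.of_divisionRing K (LinearMap.ker Am)
    haveI : Module.Free K ↥C := Module.Free.of_divisionRing K C
    obtain ⟨φ⟩ := FiniteDimensional.nonempty_linearEquiv_of_finrank_eq
      (M := ↥(LinearMap.ker Am)) (M' := ↥C) hCrank
    set proj := (LinearMap.ker Am).linearProjOfIsCompl W hcompl with hproj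
    set Fm : Module.End K (ℕ →₀ K) := C.subtype ∘ₗ (φ : LinearMap.ker Am →ₗ[K] C) ∘ₗ proj
      with hFm
    have hFW : ∀ x ∈ W, Fm x = 0 := by
      intro x hx
      have : proj x = 0 := Submodule.linearProjOfIsCompl_apply_right' hcompl hx
      simp [hFm, LinearMap.comp_apply, this]
    have hFk : ∀ k : LinearMap.ker Am, Fm ↑k = ↑(φ k) := by
      intro k
      have : proj ↑k = k := Submodule.linearProjOfIsCompl_apply_left hcompl k
      simp [hFm, LinearMap.comp_apply, this]
    have hFC : ∀ x, Fm x ∈ C := fun x => (φ (proj x)).2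
    have hFmem : Fm ∈ RCFM K := by
      rw [mem_RCFM]
      intro n
      refine ⟨m, fun v hv => ?_⟩
      rw [hFW v (Submodule.mem_sup_left hv)]
      exact (tailSubmodule K n).zero_mem
    have hFfr : FinRank Fm := by
      have hle : LinearMap.range Fm ≤ C := by
        rintro x ⟨v, rfl⟩; exact hFC v
      exact Submodule.finiteDimensional_of_le hle
    set Vr : RCFM K := A + ⟨Fm, hFmem⟩ with hVr
    have hVm : (Vr : Module.End K (ℕ →₀ K)) = Am + Fm := rfl
    -- bijectivity of Am + Fm
    have hinj : Function.Injective (Am + Fm) := by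
      rw [← LinearMap.ker_eq_bot, eq_bot_iff]
      intro x hx
      have hx' : Am x + Fm x = 0 := hx
      have h1 : Am x = -(Fm x) := eq_neg_of_add_eq_zero_left hx'
      have h2 : Am x ∈ LinearMap.range Am ⊓ C :=
        ⟨LinearMap.mem_range_self _ x, by rw [h1]; exact C.neg_mem (hFC x)⟩
      rw [disjoint_iff.mp hC.disjoint] at h2
      have hxk : x ∈ LinearMap.ker Am := h2
      have h3 : Fm x = 0 := by
        have := hx'
        rw [(hxk : Am x = 0), zero_add] at this
        exact this
      have h4 : (↑(φ ⟨x, hxk⟩) : ℕ →₀ K) = 0 := by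
        rw [← hFk ⟨x, hxk⟩]
        exact h3
      have h5 : φ ⟨x, hxk⟩ = 0 := Subtype.ext h4
      have h6 : (⟨x, hxk⟩ : LinearMap.ker Am) = 0 := by
        apply φ.injective
        rw [h5, map_zero]
      have : x = 0 := congrArg Subtype.val h6
      simp [this]
    have hsurj : Function.Surjective (Am + Fm) := by
      intro y
      have hy : y ∈ LinearMap.range Am ⊔ C := by
        rw [codisjoint_iff.mp hC.codisjoint]; trivial
      obtain ⟨a, ha, c, hcC, rfl⟩ := Submodule.mem_sup.mp hy
      obtain ⟨x, rfl⟩ := ha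
      have hx : x ∈ LinearMap.ker Am ⊔ W := by
        rw [codisjoint_iff.mp hcompl.codisjoint]; trivial
      obtain ⟨k', hk', w, hw, hkw⟩ := Submodule.mem_sup.mp hx
      obtain ⟨k, hk⟩ := φ.surjective ⟨c, hcC⟩
      refine ⟨w + ↑k, ?_⟩
      have h7 : Am ↑k = 0 := k.2
      have h8 : Fm w = 0 := hFW w hw
      have h9 : Fm ↑k = c := by rw [hFk k, hk]
      have h10 : Am x = Am w := by
        rw [← hkw, map_add, (hk' : Am k' = 0), zero_add]
      show Am (w + ↑k) + Fm (w + ↑k) = Am x + c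
      rw [map_add, map_add, h7, h8, h9, h10]
      abel
    set e := LinearEquiv.ofBijective (Am + Fm) ⟨hinj, hsurj⟩ with he
    set Vinv : Module.End K (ℕ →₀ K) := (e.symm : (ℕ →₀ K) →ₗ[K] (ℕ →₀ K)) with hVinv
    have hv1 : (Am + Fm) * Vinv = 1 := by
      refine LinearMap.ext fun x => ?_
      show (Am + Fm) (e.symm x) = x
      have := e.apply_symm_apply x
      exact this
    have hv2 : Vinv * (Am + Fm) = 1 := by
      refine LinearMap.ext fun x => ?_
      show e.symm ((Am + Fm) x) = x
      have := e.symm_apply_apply x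
      exact this
    -- s' and t'
    set s' : Module.End K (ℕ →₀ K) := Bm * (Am + Fm) - 1 with hs'
    set t' : Module.End K (ℕ →₀ K) := (Am + Fm) * Bm - 1 with ht'
    have hs'r : ((B * Vr - 1 : RCFM K) : Module.End K (ℕ →₀ K)) = s' := rfl
    have ht'r : ((Vr * B - 1 : RCFM K) : Module.End K (ℕ →₀ K)) = t' := rfl
    have hs'fr : FinRank s' := by
      have heq : s' = (Bm * Am - 1) + Bm * Fm := by rw [hs', mul_add Bm Am Fm]; abel
      rw [heq]
      exact finrank_add hs₀fr (finrank_mul_left Bm hFfr)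
    have ht'fr : FinRank t' := by
      have heq : t' = (Am * Bm - 1) + Fm * Bm := by rw [ht', add_mul Am Fm Bm]; abel
      rw [heq]
      exact finrank_add ht₀fr (finrank_mul_right Bm hFfr)
    have hVmem' : Am + Fm ∈ RCFM K := (RCFM K).add_mem A.2 hFmem
    have hs'mem : s' ∈ RCFM K := by
      rw [hs']
      exact RCFM_sub_mem _ _ ((RCFM K).mul_mem B.2 hVmem') (one_mem _)
    have ht'mem : t' ∈ RCFM K := by
      rw [ht']
      exact RCFM_sub_mem _ _ ((RCFM K).mul_mem hVmem' B.2) (one_mem _)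
    obtain ⟨m₂, hm₂⟩ := kills_tail ht'mem ht'fr
    -- the inverse identity
    have h₁ : s' * Vinv = Bm - Vinv := by
      rw [hs', sub_mul (Bm * (Am + Fm)) 1 Vinv, one_mul, mul_assoc, hv1, mul_one]
    have h₂ : Vinv * t' = Bm - Vinv := by
      rw [ht', mul_sub Vinv ((Am + Fm) * Bm) 1, mul_one, ← mul_assoc, hv2, one_mul]
    have hid : Vinv = Bm - s' * Bm + s' * Vinv * t' := by
      have h₃ : s' * Bm = Bm * t' := by
        rw [hs', ht', sub_mul (Bm * (Am + Fm)) 1 Bm,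
          mul_sub Bm ((Am + Fm) * Bm) 1, one_mul, mul_one, mul_assoc]
      rw [h₁, sub_mul Bm Vinv t', h₂, h₃]
      abel
    have hVinvMem : Vinv ∈ RCFM K := by
      rw [hid]
      have hlast : s' * Vinv * t' ∈ RCFM K := by
        rw [mem_RCFM]
        intro n
        refine ⟨m₂, fun v hv => ?_⟩
        have : (s' * Vinv * t') v = (s' * Vinv) (t' v) := rfl
        rw [this, hm₂ v hv, map_zero]
        exact (tailSubmodule K n).zero_mem
      exact (RCFM K).add_mem
        (RCFM_sub_mem _ _ B.2 ((RCFM K).mul_mem hs'mem B.2)) hlast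
    have hunit : IsUnit Vr := by
      refine ⟨⟨Vr, ⟨Vinv, hVinvMem⟩, ?_, ?_⟩, rfl⟩
      · exact Subtype.ext hv1
      · exact Subtype.ext hv2
    refine ⟨Vr, A - Vr, hunit, ?_, by abel⟩
    rw [memMinf]
    have hcoe : ((A - Vr : RCFM K) : Module.End K (ℕ →₀ K)) = -Fm := by
      have : ((A - Vr : RCFM K) : Module.End K (ℕ →₀ K)) = Am - (Am + Fm) := rfl
      rw [this]; abel
    rw [hcoe]
    exact finrank_neg hFfr
  · rintro ⟨V, T, hV, hT, rfl⟩
    have hTfr : FinRank ((T : Module.End K (ℕ →₀ K))) := (memMinf T).mp hT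
    obtain ⟨u, hu⟩ := hV
    set Vm : Module.End K (ℕ →₀ K) := (V : Module.End K (ℕ →₀ K)) with hVm
    set Tm : Module.End K (ℕ →₀ K) := (T : Module.End K (ℕ →₀ K)) with hTm
    set Wm : Module.End K (ℕ →₀ K) := ((↑(u⁻¹) : RCFM K) : Module.End K (ℕ →₀ K)) with hWm
    have h1 : Vm * Wm = 1 := by
      have : ((↑u * ↑(u⁻¹) : RCFM K) : Module.End K (ℕ →₀ K)) = 1 := by
        rw [Units.mul_inv]; rfl
      rwa [hu] at this
    have h2 : Wm * Vm = 1 := by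
      have : ((↑(u⁻¹) * ↑u : RCFM K) : Module.End K (ℕ →₀ K)) = 1 := by
        rw [Units.inv_mul]; rfl
      rwa [hu] at this
    set e : (ℕ →₀ K) ≃ₗ[K] (ℕ →₀ K) :=
      LinearEquiv.ofLinear Vm Wm (by rw [← Module.End.mul_eq_comp]; exact h1)
        (by rw [← Module.End.mul_eq_comp]; exact h2) with he
    set s : Module.End K (ℕ →₀ K) := Wm * Tm with hs
    have hsfr : FiniteDimensional K (LinearMap.range s) := by
      rw [hs, Module.End.mul_eq_comp, LinearMap.range_comp]
      haveI : Module.Finite K (LinearMap.range Tm) := hTfr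
      exact Module.Finite.map _ _
    obtain ⟨hk, hq, heq⟩ := one_add_finrank_facts s hsfr
    have hVT : ((V + T : RCFM K) : Module.End K (ℕ →₀ K)) = Vm ∘ₗ (1 + s) := by
      refine LinearMap.ext fun x => ?_
      show Vm x + Tm x = Vm (x + s x)
      rw [map_add]
      congr 1
      show Tm x = Vm (Wm (Tm x))
      have : Vm (Wm (Tm x)) = (Vm * Wm) (Tm x) := rfl
      rw [this, h1]
      rfl
    have hker : LinearMap.ker ((V + T : RCFM K) : Module.End K (ℕ →₀ K)) =
        LinearMap.ker (1 + s) := by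
      rw [hVT]
      have : Vm ∘ₗ (1 + s) = (e : (ℕ →₀ K) →ₗ[K] (ℕ →₀ K)) ∘ₗ (1 + s) := rfl
      rw [this]
      exact LinearEquiv.ker_comp e (1 + s)
    have hmap : Submodule.map (e : (ℕ →₀ K) →ₗ[K] (ℕ →₀ K)) (LinearMap.range (1 + s)) =
        LinearMap.range ((V + T : RCFM K) : Module.End K (ℕ →₀ K)) := by
      rw [hVT, LinearMap.range_comp]
      rfl
    have equot : ((ℕ →₀ K) ⧸ LinearMap.range (1 + s)) ≃ₗ[K]
        ((ℕ →₀ K) ⧸ LinearMap.range ((V + T : RCFM K) : Module.End K (ℕ →₀ K))) :=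
      Submodule.Quotient.equiv _ _ e hmap
    unfold ind
    rw [hker, ← equot.finrank_eq, heq]
    ring
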